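/- Suppose G(V,E) is a tree, so m = |E| = |V| − 1 = n − 1. Then the map π from liquidity states to wealth distributions is injective: any two liquidity states λ, μ ∈ L_G with π(λ) = π(μ) are equal. Hence L_G is in bijection with the set W_G of feasible wealth distributions. -/

import Mathlib

open Finset

/-- On a tree, the projection from liquidity states to wealth distributions is
injective: two liquidity states with the same induced wealth distribution are
equal.  (Hence liquidity states are in bijection with the feasible wealth
distributions.) -/
theorem tree_liquidity_injective
    {V : Type*} [Fintype V] [DecidableEq V]
    (G : SimpleGraph V) [DecidableRel G.Adj] (hT : G.IsTree)
    (cap : V → V → ℕ) (lam mu : V → V → ℕ)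
    (hlam : ∀ u v, G.Adj u v → lam u v + lam v u = cap u v)
    (hlam0 : ∀ u v, ¬ G.Adj u v → lam u v = 0)
    (hmu : ∀ u v, G.Adj u v → mu u v + mu v u = cap u v)
    (hmu0 : ∀ u v, ¬ G.Adj u v → mu u v = 0)
    (hπ : ∀ v : V, (∑ u, lam v u) = ∑ u, mu v u) :
    lam = mu := by
  classical
  set f : V → V → ℤ := fun u v => (lam u v : ℤ) - (mu u v : ℤ) with hf
  have hanti : ∀ u v, f u v + f v u = 0 := by
    intro u v
    by_cases h : G.Adj u v
    · have h1 := hlam u v h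
      have h2 := hmu u v h
      simp only [hf]
      omega
    · have h' : ¬ G.Adj v u := fun h' => h h'.symm
      simp [hf, hlam0 u v h, hlam0 v u h', hmu0 u v h, hmu0 v u h']
  have hdiv : ∀ v, ∑ u, f v u = 0 := by
    intro v
    simp only [hf, Finset.sum_sub_distrib]
    have h1 : ((∑ u, lam v u : ℕ) : ℤ) = ((∑ u, mu v u : ℕ) : ℤ) := by
      exact_mod_cast hπ v
    push_cast at h1
    omega
  funext a b
  by_cases hab : G.Adj a b
  swap
  · rw [hlam0 a b hab, hmu0 a b hab]
  -- the edge (a,b) is a bridge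
  have hbr : ¬ (G.deleteEdges {s(a,b)}).Reachable a b := by
    have hB := (SimpleGraph.isAcyclic_iff_forall_adj_isBridge.mp hT.2) hab
    exact (SimpleGraph.isBridge_iff.mp hB)
  set P : V → Prop := fun w => (G.deleteEdges {s(a,b)}).Reachable a w with hP
  set S : Finset V := univ.filter P with hS
  have haS : a ∈ S := by
    simp only [hS, hP, Finset.mem_filter, Finset.mem_univ, true_and]
    exact SimpleGraph.Reachable.refl a
  have hbS : b ∉ S := by
    simp only [hS, hP, Finset.mem_filter, Finset.mem_univ, true_and]
    exact hbr
  -- all cross terms vanish except (a,b)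
  have hcross : ∀ v ∈ S, ∀ u ∉ S, (v, u) ≠ (a, b) → f v u = 0 := by
    intro v hv u hu hne
    by_cases hadj : G.Adj v u
    · exfalso
      have hvS : P v := by
        simpa only [hS, Finset.mem_filter, Finset.mem_univ, true_and] using hv
      have hedge : s(v,u) ≠ s(a,b) := by
        intro he
        rw [Sym2.eq_iff] at he
        rcases he with ⟨rfl, rfl⟩ | ⟨rfl, rfl⟩
        · exact hne rfl
        · exact hbS hv
      have hadj' : (G.deleteEdges {s(a,b)}).Adj v u := by
        rw [SimpleGraph.deleteEdges_adj]
        exact ⟨hadj, by simpa using hedge⟩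
      refine hu ?_
      simp only [hS, Finset.mem_filter, Finset.mem_univ, true_and]
      exact hvS.trans hadj'.reachable
    · simp [hf, hlam0 v u hadj, hmu0 v u hadj]
  have h0 : ∑ v ∈ S, ∑ u, f v u = 0 := Finset.sum_eq_zero fun v _ => hdiv v
  have hsplit : ∀ v, ∑ u, f v u = ∑ u ∈ S, f v u + ∑ u ∈ Sᶜ, f v u :=
    fun v => (Finset.sum_add_sum_compl S _).symm
  have hsym : ∑ v ∈ S, ∑ u ∈ S, f v u = 0 := by
    have h2 : (∑ v ∈ S, ∑ u ∈ S, f v u) + (∑ v ∈ S, ∑ u ∈ S, f v u) = 0 := by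
      nth_rewrite 1 [Finset.sum_comm]
      rw [← Finset.sum_add_distrib]
      refine Finset.sum_eq_zero fun v _ => ?_
      rw [← Finset.sum_add_distrib]
      exact Finset.sum_eq_zero fun u _ => hanti u v
    linarith
  have hrest : ∑ v ∈ S, ∑ u ∈ Sᶜ, f v u = f a b := by
    rw [← Finset.sum_product']
    refine Finset.sum_eq_single_of_mem (a, b)
      (Finset.mem_product.mpr ⟨haS, Finset.mem_compl.mpr hbS⟩) ?_
    intro p hp hne
    obtain ⟨hp1, hp2⟩ := Finset.mem_product.mp hp
    exact hcross p.1 hp1 p.2 (Finset.mem_compl.mp hp2) (by simpa using hne)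
  have hzero : f a b = 0 := by
    have h0' := h0
    simp_rw [hsplit] at h0'
    rw [Finset.sum_add_distrib, hsym, hrest] at h0'
    linarith
  have hfin : (lam a b : ℤ) = (mu a b : ℤ) := by
    simp only [hf] at hzero
    omega
  exact_mod_cast hfin
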